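/- Fix x ∈ (0,1]. If w ∈ Λ_n(x) is a full parameter word and v ∈ Σ_m(β̲(w)) is an admissible word in base β̲(w), then the concatenation wv belongs to Ω_{n+m}(x). If moreover v ∈ Ξ_m(β̲(w)) (v is full in base β̲(w)), then wv ∈ Λ_{n+m}(x). -/

import Mathlib

open MeasureTheory Set
open scoped Classical

/-- The beta-transformation `T_β x = βx - ⌊βx⌋`. -/
noncomputable def betaT (β x : ℝ) : ℝ := Int.fract (β * x)

/-- The `k`-th digit (0-indexed) of the β-expansion of `x`: `ε_{k+1}(x,β) = ⌊β T_β^k x⌋`. -/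
noncomputable def betaDigit (β x : ℝ) (k : ℕ) : ℕ := ⌊β * (betaT β)^[k] x⌋₊

/-- `Σ_n(β)`: admissible words of length `n`, i.e. prefixes of β-expansions of points of `[0,1)`. -/
def admWords (β : ℝ) (n : ℕ) : Set (Fin n → ℕ) :=
  {w | ∃ x ∈ Set.Ico (0:ℝ) 1, ∀ i : Fin n, w i = betaDigit β x i}

/-- The cylinder `𝔍(w)` of points of `[0,1)` whose β-expansion starts with `w`. -/
def cyl (β : ℝ) {n : ℕ} (w : Fin n → ℕ) : Set ℝ :=
  {x | x ∈ Set.Ico (0:ℝ) 1 ∧ ∀ i : Fin n, betaDigit β x i = w i}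

/-- `Ξ_n(β)`: admissible words of length `n` whose cylinder is full (of length `β^{-n}`). -/
def fullWords (β : ℝ) (n : ℕ) : Set (Fin n → ℕ) :=
  {w | w ∈ admWords β n ∧ volume (cyl β w) = ENNReal.ofReal (1 / β ^ n)}

/-- `ε(β)`: the β-expansion of 1 (0-indexed). -/
noncomputable def eps1 (β : ℝ) (k : ℕ) : ℕ := betaDigit β 1 k

/-- `ε*(β)`: the infinite β-expansion of 1.  If `ε(β)` has a last nonzero digit at
(0-indexed) position `N`, it is the periodic sequence `(ε_0 ⋯ ε_{N-1} (ε_N - 1))^∞`;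
otherwise it is `ε(β)` itself. -/

noncomputable def epsStar (β : ℝ) : ℕ → ℕ :=
  if h : ∃ N, eps1 β N ≠ 0 ∧ ∀ k, N < k → eps1 β k = 0 then
    fun k => if k % (h.choose + 1) = h.choose then eps1 β h.choose - 1
             else eps1 β (k % (h.choose + 1))
  else eps1 β

/-- Strict lexicographic order on sequences of nonnegative integers. -/
def lexLt (a b : ℕ → ℕ) : Prop := ∃ i, (∀ j, j < i → a j = b j) ∧ a i < b i

/-- Strict lexicographic order on words of length `n`. -/
def wordLt {n : ℕ} (a b : Fin n → ℕ) : Prop :=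
  ∃ i : Fin n, (∀ j, j < i → a j = b j) ∧ a i < b i

/-- `Ω_n(x)`: all length-`n` prefixes of β-expansions of `x` over all bases `β > 1`. -/
def prefWords (x : ℝ) (n : ℕ) : Set (Fin n → ℕ) :=
  {w | ∃ β : ℝ, 1 < β ∧ ∀ i : Fin n, w i = betaDigit β x i}

/-- The parameter cylinder `I(w) = {β > 1 : ε_1(x,β)⋯ε_n(x,β) = w}`. -/
def pcyl (x : ℝ) {n : ℕ} (w : Fin n → ℕ) : Set ℝ :=
  {β | 1 < β ∧ ∀ i : Fin n, betaDigit β x i = w i}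

/-- `Λ_n(x)`: words whose parameter cylinder is full, i.e. `{T_β^n x : β ∈ I(w)} = [0,1)`. -/
def pfull (x : ℝ) (n : ℕ) : Set (Fin n → ℕ) :=
  {w | w ∈ prefWords x n ∧ (fun β => (betaT β)^[n] x) '' pcyl x w = Set.Ico (0:ℝ) 1}

section helper
lemma iter_nonneg {β y : ℝ} (hy : 0 ≤ y) (k : ℕ) : 0 ≤ (betaT β)^[k] y := by
  cases k with
  | zero => exact hy
  | succ k => rw [Function.iterate_succ_apply']; exact Int.fract_nonneg _

lemma iter_lt_one {β y : ℝ} (hy : y < 1) (k : ℕ) : (betaT β)^[k] y < 1 := by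
  cases k with
  | zero => exact hy
  | succ k => rw [Function.iterate_succ_apply']; exact Int.fract_lt_one _

lemma betaT_eq {β y : ℝ} (h : 0 ≤ β * y) : betaT β y = β * y - (⌊β * y⌋₊ : ℝ) := by
  rw [betaT, Int.fract, natCast_floor_eq_intCast_floor h]

lemma iter_succ_eq {β y : ℝ} (hβ : 0 ≤ β) (hy : 0 ≤ y) (k : ℕ) :
    (betaT β)^[k+1] y = β * (betaT β)^[k] y - (betaDigit β y k : ℝ) := by
  rw [Function.iterate_succ_apply', betaDigit]
  exact betaT_eq (mul_nonneg hβ (iter_nonneg hy k))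

lemma iter_formula {β y : ℝ} (hβ : 0 < β) (hy : 0 ≤ y) (k : ℕ) :
    (betaT β)^[k] y = β ^ k * (y - ∑ i ∈ Finset.range k, (betaDigit β y i : ℝ) / β ^ (i+1)) := by
  induction k with
  | zero => simp
  | succ k ih =>
    rw [iter_succ_eq hβ.le hy, ih, Finset.sum_range_succ]
    have h1 : β ^ (k+1) ≠ 0 := pow_ne_zero _ hβ.ne'
    field_simp
    ring

lemma iter_le_iter {β1 β2 x1 x2 : ℝ} (hβ1 : 0 < β1) (hβ : β1 ≤ β2) (hx1 : 0 ≤ x1)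
    (hx : x1 ≤ x2) (k : ℕ) (hd : ∀ i, i < k → betaDigit β1 x1 i = betaDigit β2 x2 i) :
    (betaT β1)^[k] x1 ≤ (betaT β2)^[k] x2 := by
  induction k with
  | zero => exact hx
  | succ k ih =>
    have hT : (betaT β1)^[k] x1 ≤ (betaT β2)^[k] x2 :=
      ih (fun i hi => hd i (hi.trans (Nat.lt_succ_self k)))
    have h1 : β1 * (betaT β1)^[k] x1 ≤ β2 * (betaT β2)^[k] x2 :=
      mul_le_mul hβ hT (iter_nonneg hx1 k) (hβ1.le.trans hβ)
    rw [iter_succ_eq hβ1.le hx1, iter_succ_eq (hβ1.le.trans hβ) (hx1.trans hx),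
      hd k (Nat.lt_succ_self k)]
    linarith

lemma digit_le_digit {β1 β2 x1 x2 : ℝ} (hβ1 : 0 < β1) (hβ : β1 ≤ β2) (hx1 : 0 ≤ x1)
    (hx : x1 ≤ x2) (k : ℕ) (hd : ∀ i, i < k → betaDigit β1 x1 i = betaDigit β2 x2 i) :
    betaDigit β1 x1 k ≤ betaDigit β2 x2 k :=
  Nat.floor_mono (mul_le_mul hβ (iter_le_iter hβ1 hβ hx1 hx k hd)
    (iter_nonneg hx1 k) (hβ1.le.trans hβ))

lemma digit_squeeze {β1 β2 β x1 x2 y : ℝ} (hβ1 : 0 < β1) (hb1 : β1 ≤ β) (hb2 : β ≤ β2)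
    (hx1 : 0 ≤ x1) (hy1 : x1 ≤ y) (hy2 : y ≤ x2) (W : ℕ → ℕ) (k : ℕ)
    (h1 : ∀ i, i < k → betaDigit β1 x1 i = W i) (h2 : ∀ i, i < k → betaDigit β2 x2 i = W i) :
    ∀ i, i < k → betaDigit β y i = W i := by
  intro i hi
  induction i using Nat.strong_induction_on with
  | _ i ih =>
    have hlow : ∀ j, j < i → betaDigit β1 x1 j = betaDigit β y j := by
      intro j hj; rw [h1 j (hj.trans hi), ih j hj (hj.trans hi)]
    have hhigh : ∀ j, j < i → betaDigit β y j = betaDigit β2 x2 j := by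
      intro j hj; rw [h2 j (hj.trans hi), ih j hj (hj.trans hi)]
    have l1 := digit_le_digit hβ1 hb1 hx1 hy1 i hlow
    have l2 := digit_le_digit (hβ1.trans_le hb1) hb2 (hx1.trans hy1) hy2 i hhigh
    rw [h1 i hi] at l1; rw [h2 i hi] at l2
    omega

noncomputable def rhoAux (V : ℕ → ℕ) (m : ℕ) (t β : ℝ) (j : ℕ) : ℝ :=
  (∑ k ∈ Finset.range (m - j), (V (j + k) : ℝ) / β ^ (k + 1)) + t / β ^ (m - j)

lemma rhoAux_nonneg {V m t β j} (hβ : 0 < β) (ht : 0 ≤ t) : 0 ≤ rhoAux V m t β j :=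
  add_nonneg (Finset.sum_nonneg fun k _ => div_nonneg (Nat.cast_nonneg _) (pow_pos hβ _).le)
    (div_nonneg ht (pow_pos hβ _).le)

lemma rhoAux_succ {V : ℕ → ℕ} {m : ℕ} {t β : ℝ} {j : ℕ} (hβ : 0 < β) (hj : j < m) :
    β * rhoAux V m t β j = (V j : ℝ) + rhoAux V m t β (j + 1) := by
  have hN : m - j = (m - (j+1)) + 1 := by omega
  set N := m - (j+1) with hNdef
  rw [rhoAux, rhoAux, hN, Finset.sum_range_succ']
  have hβ0 : β ≠ 0 := hβ.ne'
  rw [mul_add, mul_add, Finset.mul_sum]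
  have e1 : ∀ k ∈ Finset.range N, β * ((V (j + (k+1)) : ℝ) / β ^ (k + 1 + 1))
      = (V ((j+1) + k) : ℝ) / β ^ (k + 1) := by
    intro k _
    rw [show j + (k+1) = (j+1) + k by omega]
    field_simp
    ring
  rw [Finset.sum_congr rfl e1]
  have e2 : β * ((V (j + 0) : ℝ) / β ^ (0 + 1)) = (V j : ℝ) := by
    field_simp
    ring
  have e3 : β * (t / β ^ (N + 1)) = t / β ^ N := by
    field_simp; ring
  rw [e2, e3]; ring

lemma rhoAux_eq_iter {V : ℕ → ℕ} {m : ℕ} {β y : ℝ} (hβ : 0 < β) (hy : 0 ≤ y)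
    (hd : ∀ i, i < m → betaDigit β y i = V i) :
    ∀ k j, j + k = m → rhoAux V m ((betaT β)^[m] y) β j = (betaT β)^[j] y := by
  intro k
  induction k with
  | zero => intro j hj; subst hj; simp [rhoAux]
  | succ k ih =>
    intro j hj
    have hjm : j < m := by omega
    have h1 := ih (j+1) (by omega)
    have h2 := rhoAux_succ (V := V) (t := (betaT β)^[m] y) hβ hjm
    have h3 := iter_succ_eq (β := β) (y := y) hβ.le hy j
    rw [hd j hjm] at h3
    have : β * rhoAux V m ((betaT β)^[m] y) β j = β * (betaT β)^[j] y := by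
      rw [h2, h1]; linarith
    exact mul_left_cancel₀ hβ.ne' this

lemma rho_iter {V : ℕ → ℕ} {m : ℕ} {t β : ℝ} (hβ : 0 < β) (ht : 0 ≤ t)
    (hlt : ∀ j, j ≤ m → rhoAux V m t β j < 1) :
    ∀ j, j ≤ m → (betaT β)^[j] (rhoAux V m t β 0) = rhoAux V m t β j := by
  intro j
  induction j with
  | zero => intro _; rfl
  | succ j ih =>
    intro hj
    have hjm : j < m := by omega
    rw [Function.iterate_succ_apply', ih (by omega), betaT,
      rhoAux_succ hβ hjm]
    have : ((V j : ℝ)) = ((V j : ℤ) : ℝ) := by norm_num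
    rw [this, Int.fract_intCast_add, Int.fract_eq_self.mpr
      ⟨rhoAux_nonneg hβ ht, hlt (j+1) hj⟩]

lemma rho_digit {V : ℕ → ℕ} {m : ℕ} {t β : ℝ} (hβ : 0 < β) (ht : 0 ≤ t)
    (hlt : ∀ j, j ≤ m → rhoAux V m t β j < 1) :
    ∀ j, j < m → betaDigit β (rhoAux V m t β 0) j = V j := by
  intro j hj
  rw [betaDigit, rho_iter hβ ht hlt j hj.le, rhoAux_succ hβ hj, add_comm,
    Nat.floor_add_natCast (rhoAux_nonneg hβ ht), Nat.floor_eq_zero.mpr (hlt (j+1) hj)]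
  omega

lemma rhoAux_anti {V : ℕ → ℕ} {m : ℕ} {t β β' : ℝ} (hβ : 0 < β) (hβ' : β ≤ β')
    (ht : 0 ≤ t) (j : ℕ) : rhoAux V m t β' j ≤ rhoAux V m t β j := by
  unfold rhoAux
  refine add_le_add (Finset.sum_le_sum fun k _ => ?_) ?_
  · exact div_le_div_of_nonneg_left (Nat.cast_nonneg _) (pow_pos hβ _)
      (pow_le_pow_left₀ hβ.le hβ' _)
  · exact div_le_div_of_nonneg_left ht (pow_pos hβ _) (pow_le_pow_left₀ hβ.le hβ' _)

lemma rhoAux_mono_t {V : ℕ → ℕ} {m : ℕ} {t t' β : ℝ} (hβ : 0 < β) (htt : t ≤ t')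
    (j : ℕ) : rhoAux V m t β j ≤ rhoAux V m t' β j :=
  add_le_add le_rfl (by gcongr)
end helper
theorem pfull_extend (x : ℝ) (hx : x ∈ Set.Ioc (0:ℝ) 1) (n m : ℕ)
    (w : Fin n → ℕ) (hw : w ∈ pfull x n) (βl : ℝ) (hβl : 1 < βl)
    (hroot : x = ∑ i : Fin n, (w i : ℝ) / βl ^ ((i : ℕ) + 1)) (v : Fin m → ℕ) :
    (v ∈ admWords βl m → Fin.append w v ∈ prefWords x (n + m)) ∧
      (v ∈ fullWords βl m → Fin.append w v ∈ pfull x (n + m)) := by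
  obtain ⟨hx0, hx1⟩ := hx
  have hβl0 : (0:ℝ) < βl := lt_trans zero_lt_one hβl
  set W : ℕ → ℕ := fun i => if h : i < n then w ⟨i, h⟩ else 0 with hWdef
  set V : ℕ → ℕ := fun i => if h : i < m then v ⟨i, h⟩ else 0 with hVdef
  have hWw : ∀ (i : ℕ) (h : i < n), W i = w ⟨i, h⟩ := fun i h => dif_pos h
  have hVv : ∀ (i : ℕ) (h : i < m), V i = v ⟨i, h⟩ := fun i h => dif_pos h
  -- x as a sum over range n
  have hsum : x = ∑ i ∈ Finset.range n, (W i : ℝ) / βl ^ (i + 1) := by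
    rw [hroot, ← Fin.sum_univ_eq_sum_range (fun i => (W i : ℝ) / βl ^ (i + 1)) n]
    exact Finset.sum_congr rfl fun i _ => by rw [hWw _ i.isLt]
  -- n ≠ 0
  have hn : n ≠ 0 := by
    intro h; subst h; simp at hsum; linarith
  -- some digit of w is nonzero
  have hWpos : ∃ i, i < n ∧ 0 < W i := by
    by_contra h
    push_neg at h
    have : x = 0 := by
      rw [hsum]
      refine Finset.sum_eq_zero fun i hi => ?_
      have := h i (Finset.mem_range.mp hi)
      interval_cases h' : W i
      · simp
    linarith
  -- membership in pcyl in terms of W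
  have memP : ∀ β : ℝ, β ∈ pcyl x w ↔ 1 < β ∧ ∀ i, i < n → betaDigit β x i = W i := by
    intro β
    constructor
    · rintro ⟨h1, h2⟩
      exact ⟨h1, fun i hi => by rw [hWw i hi, ← h2 ⟨i, hi⟩]⟩
    · rintro ⟨h1, h2⟩
      exact ⟨h1, fun i => by rw [h2 i i.isLt, hWw _ i.isLt]⟩
  -- K1: on the cylinder, T^n x is the polynomial f
  have K1 : ∀ β : ℝ, 1 < β → (∀ i, i < n → betaDigit β x i = W i) →
      (betaT β)^[n] x = β ^ n * (x - ∑ i ∈ Finset.range n, (W i : ℝ) / β ^ (i + 1)) := by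
    intro β hβ hd
    rw [iter_formula (lt_trans zero_lt_one hβ) hx0.le]
    congr 2
    exact Finset.sum_congr rfl fun i hi => by rw [hd i (Finset.mem_range.mp hi)]
  -- K2: every β in the cylinder is ≥ βl
  have K2 : ∀ β : ℝ, 1 < β → (∀ i, i < n → betaDigit β x i = W i) → βl ≤ β := by
    intro β hβ hd
    by_contra h
    push_neg at h
    have hβ0 : (0:ℝ) < β := lt_trans zero_lt_one hβ
    have hlt : ∑ i ∈ Finset.range n, (W i : ℝ) / βl ^ (i + 1)
        < ∑ i ∈ Finset.range n, (W i : ℝ) / β ^ (i + 1) := by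
      obtain ⟨i0, hi0, hW0⟩ := hWpos
      refine Finset.sum_lt_sum (fun i _ => ?_) ⟨i0, Finset.mem_range.mpr hi0, ?_⟩
      · exact div_le_div_of_nonneg_left (Nat.cast_nonneg _) (pow_pos hβ0 _)
          (pow_le_pow_left₀ hβ0.le h.le _)
      · have : (0:ℝ) < (W i0 : ℝ) := by exact_mod_cast hW0
        exact div_lt_div_of_pos_left this (pow_pos hβ0 _) (pow_lt_pow_left₀ h hβ0.le (by omega))
    have hneg : (betaT β)^[n] x < 0 := by
      rw [K1 β hβ hd]
      have : x - ∑ i ∈ Finset.range n, (W i : ℝ) / β ^ (i + 1) < 0 := by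
        rw [hsum]; linarith
      exact mul_neg_of_pos_of_neg (pow_pos hβ0 _) this
    exact absurd (iter_nonneg hx0.le n) (not_le.mpr hneg)
  -- order convexity of the parameter cylinder
  have Pconv : ∀ β1 β2 β : ℝ, 1 < β1 → (∀ i, i < n → betaDigit β1 x i = W i) →
      (∀ i, i < n → betaDigit β2 x i = W i) → β1 ≤ β → β ≤ β2 →
      1 < β ∧ ∀ i, i < n → betaDigit β x i = W i := by
    intro β1 β2 β h11 h12 h22 hle1 hle2
    exact ⟨lt_of_lt_of_le h11 hle1,
      digit_squeeze (lt_trans zero_lt_one h11) hle1 hle2 hx0.le le_rfl le_rfl W n h12 h22⟩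
  -- extracting parameters from fullness of w
  have hfullpt : ∀ c : ℝ, 0 ≤ c → c < 1 → ∃ β : ℝ, (1 < β ∧ ∀ i, i < n → betaDigit β x i = W i)
      ∧ (betaT β)^[n] x = c := by
    intro c hc0 hc1
    have : c ∈ (fun β => (betaT β)^[n] x) '' pcyl x w := by
      rw [hw.2]; exact ⟨hc0, hc1⟩
    obtain ⟨β, hβmem, hβeq⟩ := this
    exact ⟨β, (memP β).mp hβmem, hβeq⟩
  -- the master construction
  have master : ∀ t : ℝ, 0 ≤ t → t < 1 → (∀ j, j ≤ m → rhoAux V m t βl j < 1) →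
      ∃ β : ℝ, (1 < β ∧ ∀ i, i < n → betaDigit β x i = W i)
        ∧ (∀ j, j < m → betaDigit β x (n + j) = V j) ∧ (betaT β)^[n + m] x = t := by
    intro t ht0 ht1 hρ
    obtain ⟨β1, hP1, hT1⟩ := hfullpt 0 le_rfl zero_lt_one
    have hc0 : 0 ≤ rhoAux V m t βl 0 := rhoAux_nonneg hβl0 ht0
    have hc1 : rhoAux V m t βl 0 < 1 := hρ 0 (Nat.zero_le m)
    obtain ⟨β2, hP2, hT2⟩ := hfullpt ((1 + rhoAux V m t βl 0) / 2) (by linarith) (by linarith)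
    set G : ℝ → ℝ := fun β => β ^ n * (x - ∑ i ∈ Finset.range n, (W i : ℝ) / β ^ (i + 1))
      - rhoAux V m t β 0 with hGdef
    have hβ1l : βl ≤ β1 := K2 β1 hP1.1 hP1.2
    have hβ2l : βl ≤ β2 := K2 β2 hP2.1 hP2.2
    have hG1 : G β1 ≤ 0 := by
      have := K1 β1 hP1.1 hP1.2
      rw [hT1] at this
      simp only [hGdef]
      rw [← this]
      have : 0 ≤ rhoAux V m t β1 0 := rhoAux_nonneg (lt_trans zero_lt_one hP1.1) ht0
      linarith
    have hG2 : 0 ≤ G β2 := by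
      have he := K1 β2 hP2.1 hP2.2
      rw [hT2] at he
      have hanti := rhoAux_anti (V := V) (m := m) (t := t) hβl0 hβ2l ht0 0
      simp only [hGdef]
      rw [← he]
      linarith
    -- continuity
    have hne : ∀ β ∈ uIcc β1 β2, β ≠ 0 := by
      intro β hβ
      rw [Set.uIcc, Set.mem_Icc] at hβ
      have : (1:ℝ) < β1 ⊓ β2 := lt_inf_iff.mpr ⟨hP1.1, hP2.1⟩
      exact ne_of_gt (lt_trans zero_lt_one (lt_of_lt_of_le this hβ.1))
    have hcont : ContinuousOn G (uIcc β1 β2) := by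
      apply ContinuousOn.sub
      · exact ((continuous_pow n).continuousOn).mul (continuousOn_const.sub
          (continuousOn_finset_sum _ fun i _ => continuousOn_const.div
            ((continuous_pow (i+1)).continuousOn) (fun β hβ => pow_ne_zero _ (hne β hβ))))
      · unfold rhoAux
        exact (continuousOn_finset_sum _ fun k _ => continuousOn_const.div
            ((continuous_pow (k+1)).continuousOn) (fun β hβ => pow_ne_zero _ (hne β hβ))).add
          (continuousOn_const.div ((continuous_pow (m - 0)).continuousOn)
            (fun β hβ => pow_ne_zero _ (hne β hβ)))
    have h0mem : (0:ℝ) ∈ uIcc (G β1) (G β2) := Set.mem_uIcc.mpr (Or.inl ⟨hG1, hG2⟩)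
    obtain ⟨β, hβmem, hβeq⟩ := intermediate_value_uIcc hcont h0mem
    have hPβ : 1 < β ∧ ∀ i, i < n → betaDigit β x i = W i := by
      rcases le_total β1 β2 with h | h
      · rw [Set.uIcc_of_le h, Set.mem_Icc] at hβmem
        exact Pconv β1 β2 β hP1.1 hP1.2 hP2.2 hβmem.1 hβmem.2
      · rw [Set.uIcc_of_ge h, Set.mem_Icc] at hβmem
        exact Pconv β2 β1 β hP2.1 hP2.2 hP1.2 hβmem.1 hβmem.2
    have hβ0 : (0:ℝ) < β := lt_trans zero_lt_one hPβ.1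
    have hβls : βl ≤ β := K2 β hPβ.1 hPβ.2
    have hρβ : ∀ j, j ≤ m → rhoAux V m t β j < 1 := fun j hj =>
      lt_of_le_of_lt (rhoAux_anti hβl0 hβls ht0 j) (hρ j hj)
    have hTn : (betaT β)^[n] x = rhoAux V m t β 0 := by
      have := K1 β hPβ.1 hPβ.2
      simp only [hGdef] at hβeq
      rw [this]; linarith
    have hshift : ∀ j : ℕ, (betaT β)^[n + j] x = (betaT β)^[j] (rhoAux V m t β 0) := by
      intro j
      rw [show n + j = j + n by omega, Function.iterate_add_apply, hTn]
    refine ⟨β, hPβ, fun j hj => ?_, ?_⟩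
    · rw [betaDigit, hshift j, ← betaDigit, rho_digit hβ0 ht0 hρβ j hj]
    · rw [hshift m, rho_iter hβ0 ht0 hρβ m le_rfl]
      simp [rhoAux]
  -- admissibility gives the bound on rho at t = 0
  have hadm : v ∈ admWords βl m → ∀ j, j ≤ m → rhoAux V m 0 βl j < 1 := by
    rintro ⟨y, hy, hyd⟩ j hj
    have hyd' : ∀ i, i < m → betaDigit βl y i = V i := fun i hi => by
      rw [hVv i hi, ← hyd ⟨i, hi⟩]
    have h8 := rhoAux_eq_iter hβl0 hy.1 hyd' (m - j) j (by omega)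
    calc rhoAux V m 0 βl j ≤ rhoAux V m ((betaT βl)^[m] y) βl j :=
          rhoAux_mono_t hβl0 (iter_nonneg hy.1 m) j
      _ = (betaT βl)^[j] y := h8
      _ < 1 := iter_lt_one hy.2 j
  -- builder for digit facts about the appended word
  have build : ∀ β : ℝ, (1 < β ∧ ∀ i, i < n → betaDigit β x i = W i) →
      (∀ j, j < m → betaDigit β x (n + j) = V j) →
      ∀ i : Fin (n + m), betaDigit β x i = Fin.append w v i := by
    intro β hP hD i
    refine Fin.addCases (motive := fun i => betaDigit β x ↑i = Fin.append w v i) ?_ ?_ i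
    · intro i
      simp only [Fin.append_left, Fin.coe_castAdd]
      rw [hP.2 i i.isLt, hWw _ i.isLt]
    · intro j
      simp only [Fin.append_right, Fin.coe_natAdd]
      rw [hD j j.isLt, hVv _ j.isLt]
  constructor
  · intro hv
    obtain ⟨β, hP, hD, _⟩ := master 0 le_rfl zero_lt_one (hadm hv)
    exact ⟨β, hP.1, fun i => (build β hP hD i).symm⟩
  · intro hv
    have hadm' := hadm hv.1
    set l0 := rhoAux V m 0 βl 0 with hl0def
    have hl0sum : l0 = ∑ i ∈ Finset.range m, (V i : ℝ) / βl ^ (i + 1) := by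
      simp [hl0def, rhoAux]
    have hl0cyl : l0 ∈ cyl βl v := by
      refine ⟨⟨rhoAux_nonneg hβl0 le_rfl, hadm' 0 (Nat.zero_le m)⟩, fun i => ?_⟩
      rw [show l0 = rhoAux V m 0 βl 0 from rfl,
        rho_digit hβl0 le_rfl hadm' i i.isLt, hVv _ i.isLt]
    have hcylT : ∀ z ∈ cyl βl v, (betaT βl)^[m] z = βl ^ m * (z - l0) := by
      rintro z ⟨hz, hzd⟩
      rw [iter_formula hβl0 hz.1 m, hl0sum]
      congr 2
      refine Finset.sum_congr rfl fun i hi => ?_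
      have h := (hzd ⟨i, Finset.mem_range.mp hi⟩).trans
        (hVv i (Finset.mem_range.mp hi)).symm
      rw [h]
    have hl0le : ∀ z ∈ cyl βl v, l0 ≤ z ∧ z < l0 + 1 / βl ^ m := by
      intro z hz
      have h1 := hcylT z hz
      have h2 : 0 ≤ (betaT βl)^[m] z := iter_nonneg hz.1.1 m
      have h3 : (betaT βl)^[m] z < 1 := iter_lt_one hz.1.2 m
      have hpm : (0:ℝ) < βl ^ m := pow_pos hβl0 m
      constructor
      · nlinarith
      · have h4 : z - l0 < 1 / βl ^ m := by
          rw [lt_div_iff₀ hpm]; nlinarith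
        linarith
    have hyt : ∀ t : ℝ, 0 ≤ t → t < 1 → l0 + t / βl ^ m ∈ cyl βl v := by
      intro t ht0 ht1
      rcases eq_or_lt_of_le ht0 with h0 | h0
      · rw [← h0]
        simpa using hl0cyl
      · have hpm : (0:ℝ) < βl ^ m := pow_pos hβl0 m
        have hex : ∃ z ∈ cyl βl v, l0 + t / βl ^ m ≤ z := by
          by_contra hno
          push_neg at hno
          have hsub : cyl βl v ⊆ Set.Ico l0 (l0 + t / βl ^ m) := fun z hz =>
            ⟨(hl0le z hz).1, hno z hz⟩
          have hmes := (measure_mono hsub).trans_eq (Real.volume_Ico)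
          rw [hv.2] at hmes
          have : ENNReal.ofReal (l0 + t / βl ^ m - l0) < ENNReal.ofReal (1 / βl ^ m) := by
            rw [ENNReal.ofReal_lt_ofReal_iff (by positivity)]
            have : t / βl ^ m < 1 / βl ^ m := (div_lt_div_iff_of_pos_right hpm).mpr ht1
            linarith
          exact absurd hmes (not_le.mpr this)
        obtain ⟨z, hz, hzle⟩ := hex
        have htn : 0 ≤ t / βl ^ m := div_nonneg ht0 hpm.le
        have hl0z : l0 ≤ l0 + t / βl ^ m := by linarith
        have hd : ∀ i, i < m → betaDigit βl (l0 + t / βl ^ m) i = V i := by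
          apply digit_squeeze hβl0 le_rfl le_rfl hl0cyl.1.1 hl0z hzle V m
          · intro i hi
            rw [(hl0cyl.2 ⟨i, hi⟩).trans (hVv i hi).symm]
          · intro i hi
            rw [(hz.2 ⟨i, hi⟩).trans (hVv i hi).symm]
        refine ⟨⟨add_nonneg hl0cyl.1.1 htn, lt_of_le_of_lt hzle hz.1.2⟩, fun i => ?_⟩
        rw [hd i i.isLt, hVv _ i.isLt]
    refine ⟨?_, ?_⟩
    · obtain ⟨β, hP, hD, _⟩ := master 0 le_rfl zero_lt_one hadm'
      exact ⟨β, hP.1, fun i => (build β hP hD i).symm⟩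
    · apply Set.Subset.antisymm
      · rintro c ⟨β, hβmem, rfl⟩
        obtain ⟨k, hk⟩ : ∃ k, n + m = k + 1 := ⟨n + m - 1, by omega⟩
        simp only [hk]
        rw [Function.iterate_succ_apply']
        exact ⟨Int.fract_nonneg _, Int.fract_lt_one _⟩
      · intro t ht
        have hytm := hyt t ht.1 ht.2
        have hpm : (0:ℝ) < βl ^ m := pow_pos hβl0 m
        have hTyt : (betaT βl)^[m] (l0 + t / βl ^ m) = t := by
          rw [hcylT _ hytm, show l0 + t / βl ^ m - l0 = t / βl ^ m by ring]
          field_simp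
        have hρt : ∀ j, j ≤ m → rhoAux V m t βl j < 1 := by
          intro j hj
          have hyd' : ∀ i, i < m → betaDigit βl (l0 + t / βl ^ m) i = V i := fun i hi => by
            rw [(hytm.2 ⟨i, hi⟩).trans (hVv i hi).symm]
          have h8 := rhoAux_eq_iter hβl0 hytm.1.1 hyd' (m - j) j (by omega)
          rw [hTyt] at h8
          rw [h8]
          exact iter_lt_one hytm.1.2 j
        obtain ⟨β, hP, hD, hT⟩ := master t ht.1 ht.2 hρt
        exact ⟨β, ⟨hP.1, fun i => build β hP hD i⟩, hT⟩
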